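/- arXiv:1904.00203 — 3 statements merged into one kernel-verified Lean document; each statement's English description precedes it below -/
import Mathlib

section
/- Let A = [[P, Q], [O, S]] be a block upper-triangular matrix in Sp(2g, ℤ). Then the bilinear form on U = ker(S - I_g) ⊆ ℚ^g defined by ⟨x, y⟩ = ᵗx·ᵗQ·y is symmetric. -/
open Matrix

def symplJ (g : ℕ) : Matrix (Fin g ⊕ Fin g) (Fin g ⊕ Fin g) ℤ :=
  fromBlocks 0 1 (-1) 0

def IsSymplectic {g : ℕ} (A : Matrix (Fin g ⊕ Fin g) (Fin g ⊕ Fin g) ℤ) : Prop :=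
  Aᵀ * symplJ g * A = symplJ g

/-- The bilinear form `⟨x, y⟩ = ᵗx·ᵗQ·y` is symmetric on `ker(S - I) ⊆ ℚ^g`. -/
theorem form_symm_on_ker (g : ℕ) (P Q S : Matrix (Fin g) (Fin g) ℤ)
    (hA : IsSymplectic (fromBlocks P Q 0 S))
    (x y : Fin g → ℚ)
    (hx : (S.map ((↑) : ℤ → ℚ)) *ᵥ x = x)
    (hy : (S.map ((↑) : ℤ → ℚ)) *ᵥ y = y) :
    x ⬝ᵥ (Q.map ((↑) : ℤ → ℚ))ᵀ *ᵥ y = y ⬝ᵥ (Q.map ((↑) : ℤ → ℚ))ᵀ *ᵥ x := by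
  unfold IsSymplectic symplJ at hA
  rw [fromBlocks_transpose] at hA
  rw [fromBlocks_multiply, fromBlocks_multiply] at hA
  have h22 := congrArg Matrix.toBlocks₂₂ hA
  simp [toBlocks_fromBlocks₂₂] at h22
  have h' : Qᵀ * S = Sᵀ * Q := by
    have := h22
    linear_combination (norm := noncomm_ring) this
  set Qq := Q.map ((↑) : ℤ → ℚ)
  set Sq := S.map ((↑) : ℤ → ℚ)
  have hsym : Qqᵀ * Sq = Sqᵀ * Qq := by
    ext i j
    have := congrFun (congrFun h' i) j
    simp only [Matrix.mul_apply, Matrix.transpose_apply, Matrix.map_apply, Qq, Sq]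
    simp only [Matrix.mul_apply, Matrix.transpose_apply] at this
    exact_mod_cast this
  calc x ⬝ᵥ Qqᵀ *ᵥ y = x ⬝ᵥ Qqᵀ *ᵥ (Sq *ᵥ y) := by rw [hy]
    _ = x ⬝ᵥ (Qqᵀ * Sq) *ᵥ y := by rw [mulVec_mulVec]
    _ = x ⬝ᵥ (Sqᵀ * Qq) *ᵥ y := by rw [hsym]
    _ = x ⬝ᵥ Sqᵀ *ᵥ (Qq *ᵥ y) := by rw [mulVec_mulVec]
    _ = (x ᵥ* Sqᵀ) ⬝ᵥ (Qq *ᵥ y) := by rw [dotProduct_mulVec]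
    _ = (Sq *ᵥ x) ⬝ᵥ (Qq *ᵥ y) := by rw [vecMul_transpose]
    _ = x ⬝ᵥ (Qq *ᵥ y) := by rw [hx]
    _ = (Qq *ᵥ y) ⬝ᵥ x := dotProduct_comm _ _
    _ = (y ᵥ* Qqᵀ) ⬝ᵥ x := by rw [vecMul_transpose]
    _ = y ⬝ᵥ Qqᵀ *ᵥ x := by rw [dotProduct_mulVec]
end

section
/- For A, B ∈ Sp(2g, ℤ), the bilinear form ⟨(x,y), (x',y')⟩ := ᵗ(x+y)·J·(I - B)·y' on the real vector space V_{A,B} = {(x,y) ∈ ℝ^{2g} ⊕ ℝ^{2g} : (A⁻¹ - I)x + (B - I)y = 0} is symmetric. -/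
open Matrix

lemma symplJ_mul_self (g : ℕ) : symplJ g * symplJ g = -1 := by
  simp [symplJ, fromBlocks_multiply, ← fromBlocks_one, fromBlocks_neg]

lemma symplJ_transpose (g : ℕ) : (symplJ g)ᵀ = -(symplJ g) := by
  simp [symplJ, fromBlocks_transpose, fromBlocks_neg]

lemma conj_dot {n : Type*} [Fintype n] [DecidableEq n]
    (M J : Matrix n n ℝ) (h : Mᵀ * J * M = J) (a b : n → ℝ) :
    (M *ᵥ a) ⬝ᵥ J *ᵥ (M *ᵥ b) = a ⬝ᵥ J *ᵥ b := by
  rw [mulVec_mulVec, dotProduct_mulVec, ← vecMul_transpose, vecMul_vecMul,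
    ← Matrix.mul_assoc, h, ← dotProduct_mulVec]

/-- Meyer's bilinear form on `V_{A,B}` is symmetric. -/
theorem meyer_form_symm (g : ℕ)
    (A B : Matrix (Fin g ⊕ Fin g) (Fin g ⊕ Fin g) ℤ)
    (hA : IsSymplectic A) (hB : IsSymplectic B)
    (x y x' y' : Fin g ⊕ Fin g → ℝ)
    (hxy : ((A.map ((↑) : ℤ → ℝ))⁻¹ - 1) *ᵥ x + (B.map ((↑) : ℤ → ℝ) - 1) *ᵥ y = 0)
    (hxy' : ((A.map ((↑) : ℤ → ℝ))⁻¹ - 1) *ᵥ x' + (B.map ((↑) : ℤ → ℝ) - 1) *ᵥ y' = 0) :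
    (x + y) ⬝ᵥ ((symplJ g).map ((↑) : ℤ → ℝ) * (1 - B.map ((↑) : ℤ → ℝ))) *ᵥ y'
      = (x' + y') ⬝ᵥ ((symplJ g).map ((↑) : ℤ → ℝ) * (1 - B.map ((↑) : ℤ → ℝ))) *ᵥ y := by
  set f := (Int.castRingHom ℝ)
  have hf : ((↑) : ℤ → ℝ) = ⇑f := rfl
  set Ar := A.map ((↑) : ℤ → ℝ) with hAr
  set Br := B.map ((↑) : ℤ → ℝ) with hBr
  set Jr := (symplJ g).map ((↑) : ℤ → ℝ) with hJr
  -- transported identities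
  have hJJ : Jr * Jr = -1 := by
    rw [hJr, hf, ← Matrix.map_mul, symplJ_mul_self]
    ext i j
    by_cases h : i = j <;> simp [Matrix.map_apply, Matrix.one_apply, h]
  have hJA : Arᵀ * Jr * Ar = Jr := by
    rw [hAr, hJr, hf, ← Matrix.transpose_map, ← Matrix.map_mul, ← Matrix.map_mul, hA]
  have hJB : Brᵀ * Jr * Br = Jr := by
    rw [hBr, hJr, hf, ← Matrix.transpose_map, ← Matrix.map_mul, ← Matrix.map_mul, hB]
  have hJT : Jrᵀ = -Jr := by
    rw [hJr, hf, ← Matrix.transpose_map, symplJ_transpose]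
    ext i j
    simp [Matrix.map_apply]
  -- A is invertible
  have hleft : (-(Jr * Arᵀ * Jr)) * Ar = 1 := by
    have : Jr * (Arᵀ * Jr * Ar) = Jr * Jr := by rw [hJA]
    rw [hJJ] at this
    calc (-(Jr * Arᵀ * Jr)) * Ar = -(Jr * (Arᵀ * Jr * Ar)) := by noncomm_ring
    _ = 1 := by rw [this]; simp
  have hdet : IsUnit Ar.det := Matrix.isUnit_det_of_left_inverse hleft
  have hinvmul : Ar⁻¹ * Ar = 1 := Matrix.nonsing_inv_mul Ar hdet
  have hmulinv : Ar * Ar⁻¹ = 1 := Matrix.mul_nonsing_inv Ar hdet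
  -- A⁻¹ is symplectic
  have hJAinv : (Ar⁻¹)ᵀ * Jr * Ar⁻¹ = Jr := by
    have h1 : (Ar⁻¹)ᵀ * (Arᵀ * Jr * Ar) * Ar⁻¹ = (Ar⁻¹)ᵀ * Jr * Ar⁻¹ := by rw [hJA]
    rw [← h1, transpose_nonsing_inv]
    calc Arᵀ⁻¹ * (Arᵀ * Jr * Ar) * Ar⁻¹
        = (Arᵀ⁻¹ * Arᵀ) * Jr * (Ar * Ar⁻¹) := by noncomm_ring
    _ = Jr := by
        rw [Matrix.nonsing_inv_mul _ (by simpa using hdet.map (RingHom.id ℝ) |>.map (RingHom.id ℝ) ), hmulinv]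
        · simp
  -- the constraint vectors
  set u := (1 - Br) *ᵥ y with hu
  set u' := (1 - Br) *ᵥ y' with hu'
  have hueq : u = y - Br *ᵥ y := by rw [hu, sub_mulVec, one_mulVec]
  have hueq' : u' = y' - Br *ᵥ y' := by rw [hu', sub_mulVec, one_mulVec]
  have h1 : Ar⁻¹ *ᵥ x - x + (Br *ᵥ y - y) = 0 := by
    simpa [sub_mulVec, one_mulVec] using hxy
  have h1' : Ar⁻¹ *ᵥ x' - x' + (Br *ᵥ y' - y') = 0 := by
    simpa [sub_mulVec, one_mulVec] using hxy'
  have hxu : Ar⁻¹ *ᵥ x = x + u := by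
    rw [hueq]; linear_combination h1
  have hxu' : Ar⁻¹ *ᵥ x' = x' + u' := by
    rw [hueq']; linear_combination h1'
  have hBy : Br *ᵥ y = y - u := by rw [hueq]; abel
  have hBy' : Br *ᵥ y' = y' - u' := by rw [hueq']; abel
  -- skew-symmetry of J
  have skew : ∀ a b : Fin g ⊕ Fin g → ℝ, a ⬝ᵥ Jr *ᵥ b = -(b ⬝ᵥ Jr *ᵥ a) := by
    intro a b
    rw [dotProduct_mulVec, ← mulVec_transpose, hJT, neg_mulVec, neg_dotProduct,
      dotProduct_comm]
  -- the two symplectic relations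
  have E1 : (x + u) ⬝ᵥ Jr *ᵥ (x' + u') = x ⬝ᵥ Jr *ᵥ x' := by
    rw [← hxu, ← hxu']; exact conj_dot Ar⁻¹ Jr hJAinv x x'
  have E2 : (y - u) ⬝ᵥ Jr *ᵥ (y' - u') = y ⬝ᵥ Jr *ᵥ y' := by
    rw [← hBy, ← hBy']; exact conj_dot Br Jr hJB y y'
  have e1 : x ⬝ᵥ Jr *ᵥ u' + u ⬝ᵥ Jr *ᵥ x' + u ⬝ᵥ Jr *ᵥ u' = 0 := by
    rw [mulVec_add, dotProduct_add, add_dotProduct, add_dotProduct] at E1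
    linarith
  have e2 : y ⬝ᵥ Jr *ᵥ u' + u ⬝ᵥ Jr *ᵥ y' = u ⬝ᵥ Jr *ᵥ u' := by
    rw [mulVec_sub, dotProduct_sub, sub_dotProduct, sub_dotProduct] at E2
    linarith
  -- conclude
  rw [← mulVec_mulVec, ← mulVec_mulVec, ← hu, ← hu']
  rw [add_dotProduct, add_dotProduct]
  have s1 := skew x' u
  have s2 := skew y' u
  linarith
end

section
/- The abelian group generated by three elements r, s, t subject to the relations 2r = 0, 4t + 2g·s = 0, and 2(g+1)·t + g(g+1)·s = 0 is isomorphic to ℤ ⊕ ℤ/2 ⊕ ℤ/2, for every integer g ≥ 2. -/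
/-- The relation submodule of `ℤ³` (coordinates `(r, s, t)`) generated by
`2r`, `4t + 2g·s` and `2(g+1)·t + g(g+1)·s`. -/
def relSub (g : ℕ) : Submodule ℤ (ℤ × ℤ × ℤ) :=
  Submodule.span ℤ
    {((2 : ℤ), (0 : ℤ), (0 : ℤ)), ((0 : ℤ), (2 * g : ℤ), (4 : ℤ)),
      ((0 : ℤ), (g * (g + 1) : ℤ), (2 * (g + 1) : ℤ))}

lemma mem1 (g : ℕ) : ((2 : ℤ), (0 : ℤ), (0 : ℤ)) ∈ relSub g :=
  Submodule.subset_span (by left; rfl)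

lemma mem2 (g : ℕ) : ((0 : ℤ), (2 * g : ℤ), (4 : ℤ)) ∈ relSub g :=
  Submodule.subset_span (by right; left; rfl)

lemma mem3 (g : ℕ) : ((0 : ℤ), (g * (g + 1) : ℤ), (2 * (g + 1) : ℤ)) ∈ relSub g :=
  Submodule.subset_span (by right; right; rfl)

lemma cast2 (x : ℤ) (h : (2 : ℤ) ∣ x) : ((x : ℤ) : ZMod 2) = 0 :=
  (ZMod.intCast_zmod_eq_zero_iff_dvd x 2).mpr h

/-- Auxiliary: build the AddEquiv from a linear map with kernel `relSub g`. -/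
noncomputable def quotEquiv (g : ℕ) (f : (ℤ × ℤ × ℤ) →ₗ[ℤ] ℤ × ZMod 2 × ZMod 2)
    (hk : LinearMap.ker f = relSub g) (hs : Function.Surjective f) :
    ((ℤ × ℤ × ℤ) ⧸ relSub g) ≃+ ℤ × ZMod 2 × ZMod 2 :=
  ((Submodule.quotEquivOfEq _ _ hk.symm).trans
    (f.quotKerEquivOfSurjective hs)).toAddEquiv

/-- The abelianization of the hyperelliptic handlebody group:
`⟨r, s, t | 2r, 4t + 2g·s, 2(g+1)t + g(g+1)s⟩ ≅ ℤ ⊕ ℤ/2 ⊕ ℤ/2` for `g ≥ 2`. -/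
theorem abelianization_iso (g : ℕ) (hg : 2 ≤ g) :
    Nonempty (((ℤ × ℤ × ℤ) ⧸ relSub g) ≃+ ℤ × ZMod 2 × ZMod 2) := by
  rcases Nat.even_or_odd g with ⟨k, hk⟩ | ⟨k, hk⟩
  · -- even case : g = 2k
    have hG : (g : ℤ) = 2 * (k : ℤ) := by push_cast [hk]; ring
    set K : ℤ := (k : ℤ) with hK
    let f : (ℤ × ℤ × ℤ) →ₗ[ℤ] ℤ × ZMod 2 × ZMod 2 :=
      { toFun := fun p => (p.2.1 - K * p.2.2, (p.1 : ZMod 2), (p.2.2 : ZMod 2))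
        map_add' := by
          rintro ⟨a1, a2, a3⟩ ⟨b1, b2, b3⟩
          simp only [Prod.mk_add_mk, Prod.mk.injEq]
          refine ⟨by ring, by push_cast; ring, by push_cast; ring⟩
        map_smul' := by
          rintro c ⟨r, s, t⟩
          simp only [Prod.smul_mk, smul_eq_mul, zsmul_eq_mul,
            RingHom.id_apply, Prod.mk.injEq]
          refine ⟨by ring, by push_cast; ring, by push_cast; ring⟩ }
    have hfapp : ∀ p : ℤ × ℤ × ℤ,
        f p = (p.2.1 - K * p.2.2, (p.1 : ZMod 2), (p.2.2 : ZMod 2)) := fun _ => rfl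
    have hker : LinearMap.ker f = relSub g := by
      refine le_antisymm ?_ ?_
      · rintro ⟨r, s, t⟩ hx
        simp only [LinearMap.mem_ker, hfapp, Prod.ext_iff, Prod.fst_zero, Prod.snd_zero] at hx
        obtain ⟨h1, h2, h3⟩ := hx
        obtain ⟨n, hn⟩ := (ZMod.intCast_zmod_eq_zero_iff_dvd r 2).mp h2
        obtain ⟨m, hm⟩ := (ZMod.intCast_zmod_eq_zero_iff_dvd t 2).mp h3
        have hs : s = K * t := by linarith
        have hx : ((r, s, t) : ℤ × ℤ × ℤ) =
            n • ((2 : ℤ), (0 : ℤ), (0 : ℤ)) + (-(K * m)) • ((0 : ℤ), (2 * g : ℤ), (4 : ℤ))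
              + m • ((0 : ℤ), (g * (g + 1) : ℤ), (2 * (g + 1) : ℤ)) := by
          simp only [Prod.smul_mk, smul_eq_mul, Prod.mk_add_mk, Prod.mk.injEq]
          refine ⟨by rw [hn]; push_cast; ring, by rw [hs, hm, hG]; ring, by rw [hm, hG]; ring⟩
        rw [hx]
        exact Submodule.add_mem _ (Submodule.add_mem _
          (Submodule.smul_mem _ _ (mem1 g)) (Submodule.smul_mem _ _ (mem2 g)))
          (Submodule.smul_mem _ _ (mem3 g))
      · rw [relSub, Submodule.span_le]
        rintro x (rfl | rfl | rfl) <;>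
          simp only [SetLike.mem_coe, LinearMap.mem_ker, hfapp, Prod.ext_iff, Prod.fst_zero, Prod.snd_zero]
        · exact ⟨by ring, cast2 2 ⟨1, rfl⟩, cast2 0 ⟨0, rfl⟩⟩
        · exact ⟨by rw [hG]; ring, cast2 0 ⟨0, rfl⟩, cast2 4 ⟨2, rfl⟩⟩
        · exact ⟨by rw [hG]; ring, cast2 0 ⟨0, rfl⟩, cast2 _ ⟨(g : ℤ) + 1, rfl⟩⟩
    have hsurj : Function.Surjective f := by
      rintro ⟨a, b, c⟩
      obtain ⟨rb, hrb⟩ := ZMod.intCast_surjective b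
      obtain ⟨tc, htc⟩ := ZMod.intCast_surjective c
      exact ⟨(rb, a + K * tc, tc), by rw [hfapp]; simp [hrb, htc]⟩
    exact ⟨quotEquiv g f hker hsurj⟩
  · -- odd case : g = 2k+1
    have hG : (g : ℤ) = 2 * (k : ℤ) + 1 := by push_cast [hk]; ring
    set K : ℤ := (k : ℤ) with hKdef
    let f : (ℤ × ℤ × ℤ) →ₗ[ℤ] ℤ × ZMod 2 × ZMod 2 :=
      { toFun := fun p => ((g : ℤ) * p.2.2 - 2 * p.2.1, (p.1 : ZMod 2),
          ((p.2.1 - K * p.2.2 : ℤ) : ZMod 2))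
        map_add' := by
          rintro ⟨a1, a2, a3⟩ ⟨b1, b2, b3⟩
          simp only [Prod.mk_add_mk, Prod.mk.injEq]
          refine ⟨by ring, by push_cast; ring, by push_cast; ring⟩
        map_smul' := by
          rintro c ⟨r, s, t⟩
          simp only [Prod.smul_mk, smul_eq_mul, zsmul_eq_mul,
            RingHom.id_apply, Prod.mk.injEq]
          refine ⟨by ring, by push_cast; ring, by push_cast; ring⟩ }
    have hfapp : ∀ p : ℤ × ℤ × ℤ,
        f p = ((g : ℤ) * p.2.2 - 2 * p.2.1, (p.1 : ZMod 2),
          ((p.2.1 - K * p.2.2 : ℤ) : ZMod 2)) := fun _ => rfl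
    have hker : LinearMap.ker f = relSub g := by
      refine le_antisymm ?_ ?_
      · rintro ⟨r, s, t⟩ hx
        simp only [LinearMap.mem_ker, hfapp, Prod.ext_iff, Prod.fst_zero, Prod.snd_zero] at hx
        obtain ⟨h1, h2, h3⟩ := hx
        obtain ⟨n, hn⟩ := (ZMod.intCast_zmod_eq_zero_iff_dvd r 2).mp h2
        obtain ⟨m, hm⟩ := (ZMod.intCast_zmod_eq_zero_iff_dvd _ 2).mp h3
        have ht : t = 2 * (s - K * t) := by rw [hG] at h1; linarith
        have ht4 : t = 4 * m := by rw [ht, hm]; ring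
        have hs : s = (g : ℤ) * (2 * m) := by
          rw [hG] at h1 ⊢; nlinarith [ht4]
        have hx : ((r, s, t) : ℤ × ℤ × ℤ) =
            n • ((2 : ℤ), (0 : ℤ), (0 : ℤ)) + m • ((0 : ℤ), (2 * g : ℤ), (4 : ℤ)) := by
          simp only [Prod.smul_mk, smul_eq_mul, Prod.mk_add_mk, Prod.mk.injEq]
          refine ⟨by rw [hn]; push_cast; ring, by rw [hs]; ring, by rw [ht4]; ring⟩
        rw [hx]
        exact Submodule.add_mem _ (Submodule.smul_mem _ _ (mem1 g))
          (Submodule.smul_mem _ _ (mem2 g))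
      · rw [relSub, Submodule.span_le]
        rintro x (rfl | rfl | rfl) <;>
          simp only [SetLike.mem_coe, LinearMap.mem_ker, hfapp, Prod.ext_iff, Prod.fst_zero, Prod.snd_zero]
        · exact ⟨by ring, cast2 2 ⟨1, rfl⟩, cast2 0 ⟨0, by ring⟩⟩
        · exact ⟨by ring, cast2 0 ⟨0, rfl⟩, cast2 _ ⟨1, by rw [hG]; ring⟩⟩
        · exact ⟨by ring, cast2 0 ⟨0, rfl⟩, cast2 _ ⟨K + 1, by rw [hG]; ring⟩⟩
    have hsurj : Function.Surjective f := by
      rintro ⟨a, b, c⟩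
      obtain ⟨rb, hrb⟩ := ZMod.intCast_surjective b
      obtain ⟨u, hu⟩ := ZMod.intCast_surjective c
      refine ⟨(rb, K * a + (g : ℤ) * u, a + 2 * u), ?_⟩
      rw [hfapp]
      simp only [Prod.mk.injEq]
      refine ⟨by rw [hG]; ring, hrb, ?_⟩
      rw [show K * a + (g : ℤ) * u - K * (a + 2 * u) = u by rw [hG]; ring, hu]
    exact ⟨quotEquiv g f hker hsurj⟩
end
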